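/- Let p be a prime and let k ∈ ℕ, s₁, s₂, d ∈ [n], t ∈ [p] with s₁ ≤ s₂. Define B^d_{k,s₁,s₂,≥t}(n) as the set of a ∈ 𝔽_p^n with |supp(a)| = d such that every subset b of the coordinates of a contained in supp(a) with s₁ ≤ |b| ≤ s₂ satisfies R_k^*(b) ≥ t · 2^{2k}|b|^{2k}/p. Then |B^d_{k,s₁,s₂,≥t}(n)| ≤ C(n,d) · p^{d+s₂} · t^{−d + (s₁/s₂)d}. -/

import Mathlib

noncomputable def RkStar (p : ℕ) {ι : Type*} [Fintype ι] (k : ℕ) (a : ι → ZMod p) : ℕ :=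
  Nat.card {x : (Fin (2 * k) → ι) × (Fin (2 * k) → ℤˣ) //
    (∑ l, ((x.2 l : ℤ) : ZMod p) * a (x.1 l)) = 0 ∧
    ∃ l, ∀ l', x.1 l' = x.1 l → l' = l}

open Finset

section Aux

open scoped Classical

variable (p n k s₁ s₂ t : ℕ)

/-- support of a vector -/
def msupp {p n : ℕ} (a : Fin n → ZMod p) : Finset (Fin n) :=
  Finset.univ.filter (fun i => a i ≠ 0)

/-- the condition -/
def Cond (a : Fin n → ZMod p) : Prop :=
  ∀ S : Finset (Fin n), S ⊆ msupp a → s₁ ≤ S.card → S.card ≤ s₂ →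
    (t : ℝ) * 2 ^ (2 * k) * (S.card : ℝ) ^ (2 * k) / p ≤ RkStar p k (fun i : S => a i)

/-- solution pair predicate -/
def Sol {p n : ℕ} (k : ℕ) (a : Fin n → ZMod p) (T : Finset (Fin n))
    (w : (Fin (2 * k) → T) × (Fin (2 * k) → ℤˣ)) : Prop :=
  (∑ l, ((w.2 l : ℤ) : ZMod p) * a (w.1 l)) = 0 ∧ ∃ l, ∀ l', w.1 l' = w.1 l → l' = l

noncomputable instance solDec {p n : ℕ} (k : ℕ) (a : Fin n → ZMod p) (T : Finset (Fin n)) :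
    DecidablePred (Sol k a T) := fun _ => Classical.propDecidable _

variable [NeZero p]

noncomputable def Mset (F : Finset (Fin n)) : Finset (Fin n → ZMod p) :=
  Finset.univ.filter (fun a => msupp a = F ∧ Cond p n k s₁ s₂ t a)

lemma rkstar_eq {p n : ℕ} (k : ℕ) (a : Fin n → ZMod p) (T : Finset (Fin n)) :
    RkStar p k (fun i : T => a i) = (Finset.univ.filter (fun w => Sol k a T w)).card := by
  have h0 : RkStar p k (fun i : T => a i) = Nat.card {w // Sol k a T w} := rfl
  rw [h0, Nat.card_eq_fintype_card, Fintype.card_subtype]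

lemma Mset_card_le (F : Finset (Fin n)) :
    (Mset p n k s₁ s₂ t F).card ≤ p ^ F.card := by
  have h : (Mset p n k s₁ s₂ t F).card ≤ (Finset.univ : Finset (F → ZMod p)).card := by
    apply Finset.card_le_card_of_injOn (fun a (i : F) => a i)
    · intro a _; exact Finset.mem_univ _
    · intro a₁ h₁ a₂ h₂ h12
      simp only [Finset.coe_filter, Set.mem_setOf_eq, Mset, Finset.mem_coe,
        Finset.mem_filter] at h₁ h₂
      funext i
      by_cases hi : i ∈ F
      · exact congrFun h12 ⟨i, hi⟩
      · have e₁ : a₁ i = 0 := by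
          have h' : i ∉ msupp a₁ := h₁.2.1 ▸ hi
          simpa [msupp, not_not] using h'
        have e₂ : a₂ i = 0 := by
          have h' : i ∉ msupp a₂ := h₂.2.1 ▸ hi
          simpa [msupp, not_not] using h'
        rw [e₁, e₂]
  calc (Mset p n k s₁ s₂ t F).card ≤ (Finset.univ : Finset (F → ZMod p)).card := h
    _ = p ^ F.card := by
        rw [Finset.card_univ, Fintype.card_fun, ZMod.card, Fintype.card_coe]

end Aux
section Aux2

open scoped Classical

variable (p n k s₁ s₂ t : ℕ) [NeZero p]

lemma step_w (hp : p.Prime) (F T : Finset (Fin n)) (hTF : T ⊆ F)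
    (w : (Fin (2 * k) → T) × (Fin (2 * k) → ℤˣ))
    (l₀ : Fin (2 * k)) (hl₀ : ∀ l', w.1 l' = w.1 l₀ → l' = l₀) :
    ((Mset p n k s₁ s₂ t F).filter (fun a => Sol k a T w)).card
      ≤ (Mset p n k s₁ s₂ t (F.erase ((w.1 l₀ : Fin n)))).card := by
  haveI : Fact p.Prime := ⟨hp⟩
  set u : Fin n := (w.1 l₀ : Fin n) with hu
  apply Finset.card_le_card_of_injOn (fun a => Function.update a u 0)
  · -- maps to
    intro a ha
    simp only [Finset.mem_coe, Finset.mem_filter, Mset, Finset.mem_univ, true_and] at ha ⊢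
    obtain ⟨⟨hsupp, hcond⟩, hsol⟩ := ha
    have hsupp' : msupp (Function.update a u 0) = F.erase u := by
      ext i
      by_cases hiu : i = u
      · subst hiu; simp [msupp, Function.update_self]
      · simp [msupp, Function.update_of_ne hiu, Finset.mem_erase, hiu, ← hsupp]
    refine ⟨hsupp', ?_⟩
    intro S hS hS1 hS2
    have hSu : ∀ i : Fin n, i ∈ S → i ≠ u := by
      intro i hi
      exact Finset.ne_of_mem_erase (hsupp' ▸ hS hi)
    have hfun : (fun i : S => Function.update a u 0 i.1) = (fun i : S => a i.1) := by
      funext i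
      exact Function.update_of_ne (hSu i.1 i.2) _ _
    rw [hfun]
    apply hcond S _ hS1 hS2
    intro i hi
    have hie : i ∈ F.erase u := hsupp' ▸ hS hi
    rw [hsupp]
    exact Finset.mem_of_mem_erase hie
  · -- injective
    intro a₁ h₁ a₂ h₂ h12
    simp only [Finset.mem_coe, Finset.mem_filter, Mset, Finset.mem_univ, true_and] at h₁ h₂
    obtain ⟨⟨hsupp₁, -⟩, hsol₁⟩ := h₁
    obtain ⟨⟨hsupp₂, -⟩, hsol₂⟩ := h₂
    have hoff : ∀ i : Fin n, i ≠ u → a₁ i = a₂ i := by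
      intro i hi
      have hcf := congrFun h12 i
      simpa only [Function.update_of_ne hi] using hcf
    have hco : ∀ l, l ≠ l₀ → ((w.1 l : Fin n) ≠ u) := by
      intro l hl hEq
      exact hl (hl₀ l (Subtype.ext hEq))
    have hsum₁ := hsol₁.1
    have hsum₂ := hsol₂.1
    rw [← Finset.add_sum_erase Finset.univ _ (Finset.mem_univ l₀)] at hsum₁ hsum₂
    have hrest : ∑ l ∈ Finset.univ.erase l₀, ((w.2 l : ℤ) : ZMod p) * a₁ (w.1 l)
        = ∑ l ∈ Finset.univ.erase l₀, ((w.2 l : ℤ) : ZMod p) * a₂ (w.1 l) := by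
      apply Finset.sum_congr rfl
      intro l hl
      rw [hoff _ (hco l (Finset.ne_of_mem_erase hl))]
    have hmul : ((w.2 l₀ : ℤ) : ZMod p) * a₁ u = ((w.2 l₀ : ℤ) : ZMod p) * a₂ u := by
      have e1 := eq_neg_of_add_eq_zero_left hsum₁
      have e2 := eq_neg_of_add_eq_zero_left hsum₂
      rw [e1, e2, hrest]
    have hεne : ((w.2 l₀ : ℤ) : ZMod p) ≠ 0 := by
      haveI : Fact (1 < p) := ⟨hp.one_lt⟩
      rcases Int.units_eq_one_or (w.2 l₀) with h | h <;> rw [h] <;>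
        simp only [Units.val_one, Units.val_neg, Int.cast_one, Int.cast_neg] <;>
        first
          | exact one_ne_zero
          | exact neg_ne_zero.mpr one_ne_zero
    have huu : a₁ u = a₂ u := mul_left_cancel₀ hεne hmul
    funext i
    by_cases hiu : i = u
    · subst hiu; exact huu
    · exact hoff i hiu

lemma main_bound (hp : p.Prime) (hs₁ : 1 ≤ s₁) (hs₁₂ : s₁ ≤ s₂) (ht1 : 1 ≤ t) :
    ∀ F : Finset (Fin n),
      ((Mset p n k s₁ s₂ t F).card : ℝ) * (t : ℝ) ^ (F.card - (s₁ - 1)) ≤ (p : ℝ) ^ F.card := by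
  intro F
  induction F using Finset.strongInduction with
  | _ F ih =>
  by_cases hc : F.card < s₁
  · have he0 : F.card - (s₁ - 1) = 0 := by omega
    rw [he0, pow_zero, mul_one]
    have hle := Mset_card_le p n k s₁ s₂ t F
    calc ((Mset p n k s₁ s₂ t F).card : ℝ) ≤ ((p ^ F.card : ℕ) : ℝ) := by exact_mod_cast hle
      _ = (p : ℝ) ^ F.card := by push_cast; ring
  · push_neg at hc
    obtain ⟨T, hTF, hTcard⟩ := Finset.exists_subset_card_eq (s := F) (n := min F.card s₂) (min_le_left _ _)
    have hT1 : s₁ ≤ T.card := by rw [hTcard]; exact le_min hc hs₁₂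
    have hT2 : T.card ≤ s₂ := by rw [hTcard]; exact min_le_right _ _
    have hTpos : 0 < T.card := lt_of_lt_of_le hs₁ hT1
    have hppos : (0 : ℝ) < p := by
      have := hp.pos; positivity
    set M := Mset p n k s₁ s₂ t F with hM
    have hc1 : 1 ≤ F.card := le_trans hs₁ hc
    set θ : ℝ := (t : ℝ) * 2 ^ (2 * k) * (T.card : ℝ) ^ (2 * k) / p with hθ
    have ha : ∀ a ∈ M, θ ≤ ((Finset.univ.filter (fun w => Sol k a T w)).card : ℝ) := by
      intro a haM
      rw [hM, Mset, Finset.mem_filter] at haM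
      obtain ⟨-, hsupp, hcond⟩ := haM
      have h1 := hcond T (by rw [hsupp]; exact hTF) hT1 hT2
      rwa [rkstar_eq] at h1
    have hswap : ∑ a ∈ M, (Finset.univ.filter (fun w => Sol k a T w)).card
        = ∑ w : (Fin (2 * k) → T) × (Fin (2 * k) → ℤˣ),
            (M.filter (fun a => Sol k a T w)).card := by
      simp_rw [Finset.card_filter]
      exact Finset.sum_comm
    have hw : ∀ w : (Fin (2 * k) → T) × (Fin (2 * k) → ℤˣ),
        ((M.filter (fun a => Sol k a T w)).card : ℝ) * (t : ℝ) ^ (F.card - 1 - (s₁ - 1))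
          ≤ (p : ℝ) ^ (F.card - 1) := by
      intro w
      by_cases hprop : ∃ l, ∀ l', w.1 l' = w.1 l → l' = l
      · obtain ⟨l₀, hl₀⟩ := hprop
        have huF : (w.1 l₀ : Fin n) ∈ F := hTF (w.1 l₀).2
        have hinj := step_w p n k s₁ s₂ t hp F T hTF w l₀ hl₀
        have hih := ih (F.erase (w.1 l₀ : Fin n)) (Finset.erase_ssubset huF)
        rw [Finset.card_erase_of_mem huF] at hih
        calc ((M.filter (fun a => Sol k a T w)).card : ℝ) * (t : ℝ) ^ (F.card - 1 - (s₁ - 1))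
            ≤ ((Mset p n k s₁ s₂ t (F.erase (w.1 l₀ : Fin n))).card : ℝ)
                * (t : ℝ) ^ (F.card - 1 - (s₁ - 1)) := by
              apply mul_le_mul_of_nonneg_right _ (by positivity)
              exact_mod_cast hinj
          _ ≤ (p : ℝ) ^ (F.card - 1) := hih
      · have hempty : M.filter (fun a => Sol k a T w) = ∅ := by
          apply Finset.filter_eq_empty_iff.mpr
          intro a _
          exact fun hS => hprop hS.2
        rw [hempty]
        simp only [Finset.card_empty, Nat.cast_zero, zero_mul]
        positivity
    set A : ℝ := (T.card : ℝ) ^ (2 * k) * 2 ^ (2 * k) with hA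
    have hApos : (0 : ℝ) < A := by
      rw [hA]
      have : (0 : ℝ) < (T.card : ℝ) := by exact_mod_cast hTpos
      positivity
    have h1 : (M.card : ℝ) * θ ≤ ∑ a ∈ M, ((Finset.univ.filter (fun w => Sol k a T w)).card : ℝ) := by
      calc (M.card : ℝ) * θ = ∑ _a ∈ M, θ := by rw [Finset.sum_const, nsmul_eq_mul]
        _ ≤ _ := Finset.sum_le_sum ha
    have h2 : ∑ a ∈ M, ((Finset.univ.filter (fun w => Sol k a T w)).card : ℝ)
        = ∑ w : (Fin (2 * k) → T) × (Fin (2 * k) → ℤˣ),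
            ((M.filter (fun a => Sol k a T w)).card : ℝ) := by
      rw [← Nat.cast_sum, ← Nat.cast_sum, hswap]
    have hcardW : (Fintype.card ((Fin (2 * k) → T) × (Fin (2 * k) → ℤˣ)) : ℝ) = A := by
      have hZ : Fintype.card ℤˣ = 2 := rfl
      rw [Fintype.card_prod, Fintype.card_fun, Fintype.card_fun, Fintype.card_coe, hZ,
        Fintype.card_fin]
      rw [hA]
      push_cast
      ring
    have h3 : (M.card : ℝ) * θ * (t : ℝ) ^ (F.card - 1 - (s₁ - 1)) ≤ A * (p : ℝ) ^ (F.card - 1) := by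
      calc (M.card : ℝ) * θ * (t : ℝ) ^ (F.card - 1 - (s₁ - 1))
          ≤ (∑ w : (Fin (2 * k) → T) × (Fin (2 * k) → ℤˣ),
              ((M.filter (fun a => Sol k a T w)).card : ℝ)) * (t : ℝ) ^ (F.card - 1 - (s₁ - 1)) := by
            apply mul_le_mul_of_nonneg_right _ (by positivity)
            exact h1.trans (le_of_eq h2)
        _ = ∑ w : (Fin (2 * k) → T) × (Fin (2 * k) → ℤˣ),
              ((M.filter (fun a => Sol k a T w)).card : ℝ) * (t : ℝ) ^ (F.card - 1 - (s₁ - 1)) := by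
            rw [Finset.sum_mul]
        _ ≤ ∑ _w : (Fin (2 * k) → T) × (Fin (2 * k) → ℤˣ), (p : ℝ) ^ (F.card - 1) :=
            Finset.sum_le_sum (fun w _ => hw w)
        _ = A * (p : ℝ) ^ (F.card - 1) := by
            rw [Finset.sum_const, Finset.card_univ, nsmul_eq_mul, hcardW]
    -- final algebra
    have hexp : F.card - (s₁ - 1) = (F.card - 1 - (s₁ - 1)) + 1 := by omega
    have hexp2 : F.card = (F.card - 1) + 1 := by omega
    rw [hexp, pow_succ]
    calc (M.card : ℝ) * ((t : ℝ) ^ (F.card - 1 - (s₁ - 1)) * (t : ℝ))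
        = ((M.card : ℝ) * θ * (t : ℝ) ^ (F.card - 1 - (s₁ - 1))) * ((p : ℝ) / A) := by
          rw [hθ, hA]
          have hp0 : (p:ℝ) ≠ 0 := hppos.ne'
          have hA0 : (T.card:ℝ)^(2*k)*2^(2*k) ≠ 0 := hA ▸ hApos.ne'
          calc _ = (M.card:ℝ) * ((t:ℝ)^(F.card-1-(s₁-1)) * t) * (((T.card:ℝ)^(2*k)*2^(2*k)) * ((T.card:ℝ)^(2*k)*2^(2*k))⁻¹) * ((p:ℝ) * (p:ℝ)⁻¹) := by
                rw [mul_inv_cancel₀ hA0, mul_inv_cancel₀ hp0]; ring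
            _ = _ := by ring
      _ ≤ (A * (p : ℝ) ^ (F.card - 1)) * ((p : ℝ) / A) := by
          apply mul_le_mul_of_nonneg_right h3 (div_nonneg hppos.le hApos.le)
      _ = (p : ℝ) ^ F.card := by
          calc (A * (p : ℝ) ^ (F.card - 1)) * ((p : ℝ) / A) = (p : ℝ) ^ (F.card - 1) * p * (A / A) := by ring
            _ = _ := by rw [div_self hApos.ne', mul_one, ← pow_succ, ← hexp2]

end Aux2

open scoped Classical in
theorem stmt_10 {p n k s₁ s₂ d t : ℕ} (hp : p.Prime)
    (hs₁ : 1 ≤ s₁) (hs₁₂ : s₁ ≤ s₂) (hs₂ : s₂ ≤ n) (hd : d ≤ n)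
    (ht1 : 1 ≤ t) (htp : t ≤ p) :
    (Nat.card {a : Fin n → ZMod p |
        (Finset.univ.filter (fun i => a i ≠ 0)).card = d ∧
        ∀ S : Finset (Fin n), S ⊆ Finset.univ.filter (fun i => a i ≠ 0) →
          s₁ ≤ S.card → S.card ≤ s₂ →
          (t : ℝ) * 2 ^ (2 * k) * (S.card : ℝ) ^ (2 * k) / p ≤
            RkStar p k (fun i : S => a i)} : ℝ) ≤
      (n.choose d : ℝ) * (p : ℝ) ^ (d + s₂) *
        (t : ℝ) ^ (-(d : ℝ) + ((s₁ : ℝ) / s₂) * d) := by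
  haveI : NeZero p := ⟨hp.pos.ne'⟩
  have hsetq : {a : Fin n → ZMod p |
        (Finset.univ.filter (fun i => a i ≠ 0)).card = d ∧
        ∀ S : Finset (Fin n), S ⊆ Finset.univ.filter (fun i => a i ≠ 0) →
          s₁ ≤ S.card → S.card ≤ s₂ →
          (t : ℝ) * 2 ^ (2 * k) * (S.card : ℝ) ^ (2 * k) / p ≤
            RkStar p k (fun i : S => a i)}
      = ↑(Finset.univ.filter (fun a : Fin n → ZMod p =>
          (msupp a).card = d ∧ Cond p n k s₁ s₂ t a)) := by
    ext a
    simp only [Set.mem_setOf_eq, Finset.coe_filter, Finset.mem_univ, true_and]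
    exact Iff.rfl
  rw [hsetq, Nat.card_coe_set_eq, Set.ncard_coe_finset]
  set N := (Finset.univ.filter (fun a : Fin n → ZMod p =>
      (msupp a).card = d ∧ Cond p n k s₁ s₂ t a)).card with hN
  set e : ℕ := d - (s₁ - 1) with he
  -- counting bound
  have hsub : (Finset.univ.filter (fun a : Fin n → ZMod p =>
        (msupp a).card = d ∧ Cond p n k s₁ s₂ t a))
      ⊆ (Finset.powersetCard d (Finset.univ : Finset (Fin n))).biUnion
          (fun F => Mset p n k s₁ s₂ t F) := by
    intro a ha
    rw [Finset.mem_filter] at ha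
    rw [Finset.mem_biUnion]
    refine ⟨msupp a, ?_, ?_⟩
    · rw [Finset.mem_powersetCard]
      exact ⟨Finset.subset_univ _, ha.2.1⟩
    · rw [Mset, Finset.mem_filter]
      exact ⟨Finset.mem_univ _, rfl, ha.2.2⟩
  have hcard : N ≤ ∑ F ∈ Finset.powersetCard d (Finset.univ : Finset (Fin n)),
      (Mset p n k s₁ s₂ t F).card :=
    le_trans (Finset.card_le_card hsub) (Finset.card_biUnion_le)
  have htpos : (0:ℝ) < t := by exact_mod_cast ht1
  have ht1' : (1:ℝ) ≤ t := by exact_mod_cast ht1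
  have hppos : (0:ℝ) < p := by exact_mod_cast hp.pos
  have hp1 : (1:ℝ) ≤ p := by exact_mod_cast hp.one_lt.le
  have htp' : (t:ℝ) ≤ p := by exact_mod_cast htp
  have hs₂pos : (0:ℝ) < s₂ := by
    have : 0 < s₂ := lt_of_lt_of_le hs₁ hs₁₂
    exact_mod_cast this
  have key : (N : ℝ) * (t:ℝ) ^ e ≤ (n.choose d : ℝ) * (p:ℝ) ^ d := by
    calc (N : ℝ) * (t:ℝ) ^ e
        ≤ (∑ F ∈ Finset.powersetCard d (Finset.univ : Finset (Fin n)),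
            ((Mset p n k s₁ s₂ t F).card : ℝ)) * (t:ℝ) ^ e := by
          apply mul_le_mul_of_nonneg_right _ (by positivity)
          rw [← Nat.cast_sum]
          exact_mod_cast hcard
      _ = ∑ F ∈ Finset.powersetCard d (Finset.univ : Finset (Fin n)),
            ((Mset p n k s₁ s₂ t F).card : ℝ) * (t:ℝ) ^ e := by rw [Finset.sum_mul]
      _ ≤ ∑ F ∈ Finset.powersetCard d (Finset.univ : Finset (Fin n)), (p:ℝ) ^ d := by
          apply Finset.sum_le_sum
          intro F hF
          rw [Finset.mem_powersetCard] at hF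
          have := main_bound p n k s₁ s₂ t hp hs₁ hs₁₂ ht1 F
          rw [hF.2] at this
          exact this
      _ = (n.choose d : ℝ) * (p:ℝ) ^ d := by
          rw [Finset.sum_const, nsmul_eq_mul, Finset.card_powersetCard, Finset.card_univ,
            Fintype.card_fin]
  -- arithmetic finish
  set X : ℝ := -(d : ℝ) + ((s₁ : ℝ) / s₂) * d with hX
  set Y : ℝ := X + (e : ℕ) with hY
  have hone : (1:ℝ) ≤ (p:ℝ) ^ s₂ * (t:ℝ) ^ Y := by
    by_cases hY0 : 0 ≤ Y
    · calc (1:ℝ) ≤ (p:ℝ) ^ s₂ := one_le_pow₀ hp1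
        _ ≤ (p:ℝ) ^ s₂ * (t:ℝ) ^ Y :=
            le_mul_of_one_le_right (by positivity) (Real.one_le_rpow ht1' hY0)
    · push_neg at hY0
      set E : ℝ := -Y with hE
      have hEpos : 0 < E := by rw [hE]; linarith
      have hEs₂ : E ≤ (s₂ : ℝ) := by
        have hnn : 0 ≤ ((s₁ : ℝ) / s₂) * d := by positivity
        by_cases hds : s₁ ≤ d
        · have he' : ((e : ℕ) : ℝ) = (d:ℝ) - (s₁:ℝ) + 1 := by
            have h1 : e = d - s₁ + 1 := by omega
            rw [h1]
            push_cast [hds]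
            ring
          have hs₁s₂ : (s₁:ℝ) ≤ s₂ := by exact_mod_cast hs₁₂
          rw [hE, hY, hX, he']
          linarith
        · have he0 : e = 0 := by omega
          have hdle : (d:ℝ) ≤ s₂ := by
            have : d ≤ s₂ := by omega
            exact_mod_cast this
          rw [hE, hY, hX, he0]
          push_cast
          linarith
      have h7 : (t:ℝ) ^ E ≤ (p:ℝ) ^ E := Real.rpow_le_rpow htpos.le htp' hEpos.le
      have h8 : (p:ℝ) ^ E ≤ (p:ℝ) ^ ((s₂ : ℕ) : ℝ) :=
        Real.rpow_le_rpow_of_exponent_le hp1 hEs₂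
      have h9 : (p:ℝ) ^ ((s₂ : ℕ) : ℝ) = (p:ℝ) ^ (s₂ : ℕ) := Real.rpow_natCast _ _
      have h10 : (t:ℝ) ^ Y = ((t:ℝ) ^ E)⁻¹ := by
        rw [show Y = -E by rw [hE]; ring, Real.rpow_neg htpos.le]
      have hq : ((p:ℝ) ^ (s₂:ℕ))⁻¹ ≤ (t:ℝ) ^ Y := by
        rw [h10]
        exact inv_anti₀ (Real.rpow_pos_of_pos htpos E) (h7.trans (h8.trans_eq h9))
      calc (1:ℝ) = (p:ℝ) ^ s₂ * ((p:ℝ) ^ s₂)⁻¹ := (mul_inv_cancel₀ (by positivity)).symm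
        _ ≤ (p:ℝ) ^ s₂ * (t:ℝ) ^ Y := mul_le_mul_of_nonneg_left hq (by positivity)
  have h6 : (t:ℝ) ^ X * (t:ℝ) ^ (e : ℕ) = (t:ℝ) ^ Y := by
    rw [← Real.rpow_natCast (t:ℝ) e, ← Real.rpow_add htpos, hY]
  have hprod : (n.choose d : ℝ) * (p:ℝ) ^ (d + s₂) * (t:ℝ) ^ X * (t:ℝ) ^ (e : ℕ)
      = ((n.choose d : ℝ) * (p:ℝ) ^ d) * ((p:ℝ) ^ s₂ * (t:ℝ) ^ Y) := by
    calc (n.choose d : ℝ) * (p:ℝ) ^ (d + s₂) * (t:ℝ) ^ X * (t:ℝ) ^ (e : ℕ)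
        = ((n.choose d : ℝ) * (p:ℝ) ^ d) * ((p:ℝ) ^ s₂ * ((t:ℝ) ^ X * (t:ℝ) ^ (e : ℕ))) := by
          rw [pow_add]; ring
      _ = ((n.choose d : ℝ) * (p:ℝ) ^ d) * ((p:ℝ) ^ s₂ * (t:ℝ) ^ Y) := by rw [h6]
  have hfin : (n.choose d : ℝ) * (p:ℝ) ^ d
      ≤ (n.choose d : ℝ) * (p:ℝ) ^ (d + s₂) * (t:ℝ) ^ X * (t:ℝ) ^ (e : ℕ) := by
    calc (n.choose d : ℝ) * (p:ℝ) ^ d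
        = ((n.choose d : ℝ) * (p:ℝ) ^ d) * 1 := by ring
      _ ≤ ((n.choose d : ℝ) * (p:ℝ) ^ d) * ((p:ℝ) ^ s₂ * (t:ℝ) ^ Y) :=
          mul_le_mul_of_nonneg_left hone (by positivity)
      _ = _ := hprod.symm
  have h5 : (N:ℝ) * (t:ℝ) ^ e
      ≤ ((n.choose d : ℝ) * (p:ℝ) ^ (d + s₂) * (t:ℝ) ^ X) * (t:ℝ) ^ (e : ℕ) := by
    calc (N:ℝ) * (t:ℝ) ^ e ≤ (n.choose d : ℝ) * (p:ℝ) ^ d := key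
      _ ≤ _ := by
          calc (n.choose d : ℝ) * (p:ℝ) ^ d
              ≤ (n.choose d : ℝ) * (p:ℝ) ^ (d + s₂) * (t:ℝ) ^ X * (t:ℝ) ^ (e : ℕ) := hfin
            _ = ((n.choose d : ℝ) * (p:ℝ) ^ (d + s₂) * (t:ℝ) ^ X) * (t:ℝ) ^ (e : ℕ) := by ring
  exact le_of_mul_le_mul_right h5 (pow_pos htpos e)
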